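/- Let $d=1$, $\gamma \in L^1(\mathbb{R})$ nonnegative, and $0 \le s < t$. Then for all $x, y \in \mathbb{R}$: $\mathbf{K}_{s,t}(x,y) := \int_s^t \int_{\mathbb{R}^2} G_{t-r}(x-z)G_{r-s}(z-y)\,G_{t-r}(x-z')G_{r-s}(z'-y)\,\gamma(z-z')\,dz\,dz'\,dr \le \frac{t^2 \|\gamma\|_{L^1(\mathbb{R})}}{8}\, G_{t-s}(x-y)$. -/

import Mathlib

open MeasureTheory Real intervalIntegral

noncomputable def G1 (t x : ℝ) : ℝ := if |x| < t then 1/2 else 0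

lemma G1_nonneg (t x : ℝ) : 0 ≤ G1 t x := by unfold G1; split <;> norm_num

lemma G1_le_half (t x : ℝ) : G1 t x ≤ 1/2 := by unfold G1; split <;> norm_num

lemma G1_eq_indicator (t : ℝ) :
    G1 t = Set.indicator (Metric.ball (0:ℝ) t) (fun _ => 1/2) := by
  funext x
  simp [G1, Set.indicator, Metric.mem_ball, Real.dist_eq, sub_zero]

lemma G1_integrable (t : ℝ) : Integrable (G1 t) := by
  rw [G1_eq_indicator]
  refine (integrable_indicator_iff measurableSet_ball).2 ?_
  refine integrableOn_const ?_
  rw [Real.volume_ball]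
  exact ENNReal.ofReal_lt_top.ne

lemma G1_integral (t : ℝ) (ht : 0 ≤ t) : ∫ x, G1 t x = t := by
  rw [G1_eq_indicator, MeasureTheory.integral_indicator measurableSet_ball]
  rw [setIntegral_const, measureReal_def, Real.volume_ball, smul_eq_mul,
    ENNReal.toReal_ofReal (by linarith)]
  ring

theorem K_bound_1D (γ : ℝ → ℝ) (hγint : Integrable γ) (hγpos : ∀ x, 0 ≤ γ x)
    (s t x y : ℝ) (hs : 0 ≤ s) (hst : s < t) :
    (∫ r in s..t, ∫ z : ℝ, ∫ z' : ℝ,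
        G1 (t - r) (x - z) * G1 (r - s) (z - y) *
        (G1 (t - r) (x - z') * G1 (r - s) (z' - y)) * γ (z - z'))
      ≤ t ^ 2 * (∫ w, γ w) / 8 * G1 (t - s) (x - y) := by
  have hγ0 : 0 ≤ ∫ w, γ w := integral_nonneg hγpos
  have hts : 0 < t - s := by linarith
  have hRHS : 0 ≤ t ^ 2 * (∫ w, γ w) / 8 * G1 (t - s) (x - y) :=
    mul_nonneg (div_nonneg (mul_nonneg (sq_nonneg t) hγ0) (by norm_num))
      (G1_nonneg _ _)
  by_cases hxy : |x - y| < t - s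
  · -- main case
    have hG : G1 (t - s) (x - y) = 1/2 := by simp [G1, hxy]
    set F : ℝ → ℝ := fun r => ∫ z : ℝ, ∫ z' : ℝ,
        G1 (t - r) (x - z) * G1 (r - s) (z - y) *
        (G1 (t - r) (x - z') * G1 (r - s) (z' - y)) * γ (z - z') with hFdef
    have key : ∀ r ∈ Set.Icc s t, F r ≤ (∫ w, γ w) * (t - s) / 16 := by
      intro r hr
      obtain ⟨hr1, hr2⟩ := hr
      have ha : 0 ≤ t - r := by linarith
      have hb : 0 ≤ r - s := by linarith
      have inner : ∀ z : ℝ, (∫ z' : ℝ,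
          G1 (t - r) (x - z) * G1 (r - s) (z - y) *
          (G1 (t - r) (x - z') * G1 (r - s) (z' - y)) * γ (z - z'))
          ≤ G1 (t - r) (x - z) * G1 (r - s) (z - y) * ((∫ w, γ w) / 4) := by
        intro z
        have h1 : ∀ z' : ℝ, G1 (t - r) (x - z) * G1 (r - s) (z - y) *
            (G1 (t - r) (x - z') * G1 (r - s) (z' - y)) * γ (z - z')
            = (G1 (t - r) (x - z) * G1 (r - s) (z - y)) *
              ((G1 (t - r) (x - z') * G1 (r - s) (z' - y)) * γ (z - z')) :=
          fun z' => by ring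
        simp_rw [h1, MeasureTheory.integral_const_mul]
        have h2 : (∫ z' : ℝ, (G1 (t - r) (x - z') * G1 (r - s) (z' - y)) * γ (z - z'))
            ≤ (∫ w, γ w) / 4 := by
          have heq : (∫ z' : ℝ, (1/4 : ℝ) * γ (z - z')) = (∫ w, γ w) / 4 := by
            rw [MeasureTheory.integral_const_mul, integral_sub_left_eq_self]; ring
          rw [← heq]
          refine integral_mono_of_nonneg ?_ ((hγint.comp_sub_left z).const_mul _) ?_
          · filter_upwards with z'
            exact mul_nonneg (mul_nonneg (G1_nonneg _ _) (G1_nonneg _ _)) (hγpos _)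
          · filter_upwards with z'
            refine mul_le_mul_of_nonneg_right ?_ (hγpos _)
            calc G1 (t - r) (x - z') * G1 (r - s) (z' - y)
                ≤ (1/2) * (1/2) :=
                  mul_le_mul (G1_le_half _ _) (G1_le_half _ _) (G1_nonneg _ _) (by norm_num)
              _ = 1/4 := by norm_num
        exact mul_le_mul_of_nonneg_left h2
          (mul_nonneg (G1_nonneg _ _) (G1_nonneg _ _))
      have hinner_nonneg : ∀ z : ℝ, 0 ≤ ∫ z' : ℝ,
          G1 (t - r) (x - z) * G1 (r - s) (z - y) *
          (G1 (t - r) (x - z') * G1 (r - s) (z' - y)) * γ (z - z') := by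
        intro z
        refine integral_nonneg fun z' => ?_
        exact mul_nonneg (mul_nonneg (mul_nonneg (G1_nonneg _ _) (G1_nonneg _ _))
          (mul_nonneg (G1_nonneg _ _) (G1_nonneg _ _))) (hγpos _)
      rcases le_total (t - r) (r - s) with hab | hab
      · -- t - r is the smaller one
        have step : F r ≤ ∫ z : ℝ, (∫ w, γ w) / 8 * G1 (t - r) (x - z) := by
          refine integral_mono_of_nonneg ?_
            (((G1_integrable (t - r)).comp_sub_left x).const_mul _) ?_
          · filter_upwards with z using hinner_nonneg z
          · filter_upwards with z
            refine (inner z).trans ?_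
            have h3 := G1_le_half (r - s) (z - y)
            calc G1 (t - r) (x - z) * G1 (r - s) (z - y) * ((∫ w, γ w) / 4)
                ≤ G1 (t - r) (x - z) * (1/2) * ((∫ w, γ w) / 4) :=
                  mul_le_mul_of_nonneg_right
                    (mul_le_mul_of_nonneg_left h3 (G1_nonneg _ _))
                    (div_nonneg hγ0 (by norm_num))
              _ = (∫ w, γ w) / 8 * G1 (t - r) (x - z) := by ring
        rw [MeasureTheory.integral_const_mul, integral_sub_left_eq_self, G1_integral (t - r) ha] at step
        refine step.trans ?_
        nlinarith
      · -- r - s is the smaller one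
        have step : F r ≤ ∫ z : ℝ, (∫ w, γ w) / 8 * G1 (r - s) (z - y) := by
          refine integral_mono_of_nonneg ?_
            (((G1_integrable (r - s)).comp_sub_right y).const_mul _) ?_
          · filter_upwards with z using hinner_nonneg z
          · filter_upwards with z
            refine (inner z).trans ?_
            have h3 := G1_le_half (t - r) (x - z)
            calc G1 (t - r) (x - z) * G1 (r - s) (z - y) * ((∫ w, γ w) / 4)
                ≤ (1/2) * G1 (r - s) (z - y) * ((∫ w, γ w) / 4) :=
                  mul_le_mul_of_nonneg_right
                    (mul_le_mul_of_nonneg_right h3 (G1_nonneg _ _))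
                    (div_nonneg hγ0 (by norm_num))
              _ = (∫ w, γ w) / 8 * G1 (r - s) (z - y) := by ring
        rw [MeasureTheory.integral_const_mul, integral_sub_right_eq_self, G1_integral (r - s) hb] at step
        refine step.trans ?_
        nlinarith
    by_cases hF : IntervalIntegrable F volume s t
    · have hmono := intervalIntegral.integral_mono_on hst.le hF
        (_root_.intervalIntegrable_const (c := (∫ w, γ w) * (t - s) / 16)) key
      have hconst : (∫ _ in s..t, (∫ w, γ w) * (t - s) / 16)
          = (t - s) * ((∫ w, γ w) * (t - s) / 16) := by
        rw [intervalIntegral.integral_const, smul_eq_mul]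
      rw [hconst] at hmono
      refine hmono.trans ?_
      rw [hG]
      nlinarith [mul_nonneg hγ0 (mul_nonneg hs (by linarith : (0:ℝ) ≤ 2*t - s))]
    · rw [show (∫ r in s..t, ∫ z : ℝ, ∫ z' : ℝ,
        G1 (t - r) (x - z) * G1 (r - s) (z - y) *
        (G1 (t - r) (x - z') * G1 (r - s) (z' - y)) * γ (z - z')) = ∫ r in s..t, F r from rfl,
        intervalIntegral.integral_undef hF]
      exact hRHS
  · -- degenerate case: integrand is identically zero
    have hzero : ∀ r z z' : ℝ, G1 (t - r) (x - z) * G1 (r - s) (z - y) *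
        (G1 (t - r) (x - z') * G1 (r - s) (z' - y)) * γ (z - z') = 0 := by
      intro r z z'
      have h0 : G1 (t - r) (x - z) * G1 (r - s) (z - y) = 0 := by
        by_cases h1 : |x - z| < t - r
        · by_cases h2 : |z - y| < r - s
          · exfalso
            have h3 : |x - y| ≤ |x - z| + |z - y| := abs_sub_le x z y
            have : |x - y| < t - s := by linarith
            exact hxy this
          · simp [G1, h2]
        · simp [G1, h1]
      rw [h0, zero_mul, zero_mul]
    have hz : (∫ r in s..t, ∫ z : ℝ, ∫ z' : ℝ,
        G1 (t - r) (x - z) * G1 (r - s) (z - y) *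
        (G1 (t - r) (x - z') * G1 (r - s) (z' - y)) * γ (z - z')) = 0 := by
      simp only [hzero, MeasureTheory.integral_zero, intervalIntegral.integral_zero]
    rw [hz]
    exact hRHS
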